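/- arXiv:2405.21025 — 2 statements merged into one kernel-verified Lean document; each statement's English description precedes it below -/
import Mathlib

section
/- Let α, β, γ, δ be positive integers with α > γ, and A = α·δ + β·γ. Then the vector (α-γ, -(β+δ)) lies in the lattice generated by (α,-β) and (γ,δ); moreover, for every integer x with 0 < x < β+δ, the vector (α-γ, -(β+δ)+x) does not lie in that lattice. -/
theorem alpha_gamma_lemma_a (α β γ δ A : ℤ) (hα : 0 < α) (hβ : 0 < β) (hγ : 0 < γ) (hδ : 0 < δ)
    (hag : α > γ) (hA : A = α * δ + β * γ) :
    (∃ m n : ℤ, ((α - γ : ℤ), -(β + δ)) = (m * α + n * γ, m * (-β) + n * δ)) ∧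
    (∀ x : ℤ, 0 < x → x < β + δ →
      ¬ ∃ m n : ℤ, ((α - γ : ℤ), -(β + δ) + x) = (m * α + n * γ, m * (-β) + n * δ)) := by
  constructor
  · exact ⟨1, -1, by rw [Prod.mk.injEq]; constructor <;> ring⟩
  · rintro x hx1 hx2 ⟨m, n, h⟩
    obtain ⟨h1, h2⟩ := Prod.mk.injEq .. ▸ h
    set p := m - 1 with hp
    set q := n + 1 with hq
    have e1 : p * α + q * γ = 0 := by
      have : α - γ = m * α + n * γ := h1
      nlinarith [this]
    have e2 : x = -p * β + q * δ := by nlinarith [h2]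
    rcases lt_trichotomy p 0 with hp0 | hp0 | hp0
    · have hq0 : q ≥ 1 := by nlinarith
      have : p ≤ -1 := by omega
      nlinarith
    · have hq0 : q = 0 := by
        have : q * γ = 0 := by nlinarith
        rcases mul_eq_zero.mp this with h | h
        · exact h
        · omega
      rw [hp0, hq0] at e2; simp at e2; omega
    · have hq0 : q ≤ -1 := by nlinarith
      nlinarith
end

section
/- Let α, β, γ, δ be positive integers with γ > α, and A = α·δ + β·γ. Then the vector (γ-α, β+δ) lies in the lattice generated by (α,-β) and (γ,δ); moreover, for every integer x with 0 < x < β+δ, the vector (γ-α, β+δ-x) does not lie in that lattice. -/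
theorem alpha_gamma_lemma_b (α β γ δ A : ℤ) (hα : 0 < α) (hβ : 0 < β) (hγ : 0 < γ) (hδ : 0 < δ)
    (hga : γ > α) (hA : A = α * δ + β * γ) :
    (∃ m n : ℤ, ((γ - α : ℤ), β + δ) = (m * α + n * γ, m * (-β) + n * δ)) ∧
    (∀ x : ℤ, 0 < x → x < β + δ →
      ¬ ∃ m n : ℤ, ((γ - α : ℤ), β + δ - x) = (m * α + n * γ, m * (-β) + n * δ)) := by
  constructor
  · exact ⟨-1, 1, by simp [Prod.ext_iff]; ring⟩
  · rintro x hx hx' ⟨m, n, h⟩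
    rw [Prod.ext_iff] at h
    obtain ⟨h1, h2⟩ := h
    simp only at h1 h2
    -- (m+1)*α + (n-1)*γ = 0 and -(m+1)*β + (n-1)*δ = -x
    have e1 : (m + 1) * α + (n - 1) * γ = 0 := by linarith [h1]
    have e2 : -(m + 1) * β + (n - 1) * δ = -x := by linarith [h2]
    have key : (m + 1) * (α * δ + β * γ) = γ * x := by nlinarith [e1, e2]
    have hApos : (0:ℤ) < α * δ + β * γ := by positivity
    have hm1 : 0 < m + 1 := by
      by_contra hc
      push_neg at hc
      nlinarith
    have hm1' : 1 ≤ m + 1 := hm1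
    have : γ * x ≥ α * δ + β * γ := by nlinarith
    -- also key2 : (n-1)*(α*δ+β*γ) = -α*x
    have key2 : (n - 1) * (α * δ + β * γ) = -(α * x) := by nlinarith [e1, e2]
    have hn1 : n - 1 < 0 := by nlinarith
    have hn1' : n - 1 ≤ -1 := by omega
    have : α * x ≥ α * δ + β * γ := by nlinarith
    nlinarith
end
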